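/- For any ring R, the formal power series ring R[[x]] is not a GNC ring (since x lies in J(R[[x]]) but is not nilpotent). -/

import Mathlib

/-- An element is nil-clean if it is the sum of an idempotent and a nilpotent. -/
def IsNilClean {R : Type*} [Ring R] (a : R) : Prop :=
  ∃ e q : R, IsIdempotentElem e ∧ IsNilpotent q ∧ a = e + q

/-- A ring is GNC (generalized nil-clean) if every non-unit is nil-clean. -/
def IsGNC (R : Type*) [Ring R] : Prop :=
  ∀ a : R, ¬ IsUnit a → IsNilClean a

private lemma idem_constantCoeff_zero_eq_zero {R : Type*} [Ring R]
    {e : PowerSeries R} (he : IsIdempotentElem e)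
    (h0 : PowerSeries.constantCoeff (R := R) e = 0) : e = 0 := by
  ext n
  have hdvd : ∀ k : ℕ, (PowerSeries.X : PowerSeries R) ^ k ∣ e := by
    intro k
    induction k with
    | zero => simp
    | succ k ih =>
      obtain ⟨f, hf⟩ := ih
      obtain ⟨g, hg⟩ := PowerSeries.X_dvd_iff.mpr h0
      have hcomm : g * PowerSeries.X ^ k = PowerSeries.X ^ k * g :=
        ((PowerSeries.commute_X g).pow_right k).eq
      refine ⟨g * f, ?_⟩
      calc e = e * e := he.symm
        _ = (PowerSeries.X * g) * (PowerSeries.X ^ k * f) := by rw [← hg, ← hf]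
        _ = PowerSeries.X * ((g * PowerSeries.X ^ k) * f) := by
            rw [mul_assoc, mul_assoc]
        _ = PowerSeries.X * ((PowerSeries.X ^ k * g) * f) := by rw [hcomm]
        _ = (PowerSeries.X * PowerSeries.X ^ k) * (g * f) := by
            rw [mul_assoc, mul_assoc]
        _ = PowerSeries.X ^ (k + 1) * (g * f) := by rw [pow_succ']
  have := PowerSeries.X_pow_dvd_iff.mp (hdvd (n + 1)) n (by omega)
  simpa using this

theorem powerSeries_not_gnc {R : Type*} [Ring R] [Nontrivial R] :
    ¬ IsGNC (PowerSeries R) := by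
  intro h
  have hXnu : ¬ IsUnit (PowerSeries.X : PowerSeries R) := by
    intro hu
    have := hu.map (PowerSeries.constantCoeff (R := R))
    rw [PowerSeries.constantCoeff_X] at this
    exact not_isUnit_zero this
  obtain ⟨e, q, he, hq, hsum⟩ := h _ hXnu
  have h1 : PowerSeries.constantCoeff (R := R) e + PowerSeries.constantCoeff (R := R) q = 0 := by
    have := congrArg (PowerSeries.constantCoeff (R := R)) hsum
    rw [map_add, PowerSeries.constantCoeff_X] at this
    exact this.symm
  have hc : PowerSeries.constantCoeff (R := R) e = - PowerSeries.constantCoeff (R := R) q :=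
    eq_neg_of_add_eq_zero_left h1
  have hce_idem : IsIdempotentElem (PowerSeries.constantCoeff (R := R) e) :=
    he.map (PowerSeries.constantCoeff (R := R))
  have hce_nilp : IsNilpotent (PowerSeries.constantCoeff (R := R) e) := by
    rw [hc]; exact (hq.map (PowerSeries.constantCoeff (R := R))).neg
  have hce0 : PowerSeries.constantCoeff (R := R) e = 0 :=
    hce_idem.eq_zero_of_isNilpotent hce_nilp
  have he0 : e = 0 := idem_constantCoeff_zero_eq_zero he hce0
  rw [he0, zero_add] at hsum
  rw [← hsum] at hq
  obtain ⟨n, hn⟩ := hq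
  have := congrArg (PowerSeries.coeff (R := R) n) hn
  simp at this
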